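/- Let Y be an affine space under a real vector space V. On the set of convex cones of Y of the form x + f⃗ with f⃗ a fixed convex cone of V, define f ∼ g iff f and g are parallel (same direction cone) and f ∩ g ≠ ∅. Then: (i) f ∼ g iff f ∩ g contains a subcone parallel to both f and g; (ii) for f = x + f⃗ and g = y + f⃗, f ∼ g iff the vector xy→ lies in the linear span of f⃗; (iii) ∼ is an equivalence relation, and the quotient is an affine space isomorphic to Y/Span(f⃗). -/
import Mathlib


/-- The cone of direction c based at x in the affine space Y. -/
def coneAt {V Y : Type*} [AddCommGroup V] [Module ℝ V] [AddTorsor V Y]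
    (c : Set V) (x : Y) : Set Y :=
  (fun a => a +ᵥ x) '' c

/-- For a fixed nonempty convex cone c of V: (i) two parallel cones meet iff
their intersection contains a parallel subcone; (ii) x + c and y + c meet iff
the vector between their base points lies in Span(c); (iii) the relation is an
equivalence, whose quotient is the affine space Y / Span(c). -/
theorem cone_equivalence_and_quotient {V Y : Type*} [AddCommGroup V]
    [Module ℝ V] [AddTorsor V Y]
    (c : Set V) (hne : c.Nonempty)
    (hcone : ∀ a ∈ c, ∀ r : ℝ, 0 < r → r • a ∈ c)
    (hconv : Convex ℝ c) :
    (∀ x y : Y, (coneAt c x ∩ coneAt c y).Nonempty ↔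
        ∃ z : Y, coneAt c z ⊆ coneAt c x ∩ coneAt c y) ∧
    (∀ x y : Y, (coneAt c x ∩ coneAt c y).Nonempty ↔
        x -ᵥ y ∈ Submodule.span ℝ c) ∧
    Equivalence (fun x y : Y => (coneAt c x ∩ coneAt c y).Nonempty) ∧
    ∀ o x y : Y, (coneAt c x ∩ coneAt c y).Nonempty ↔
        (Submodule.Quotient.mk (x -ᵥ o) : V ⧸ Submodule.span ℝ c)
          = Submodule.Quotient.mk (y -ᵥ o) := by
  obtain ⟨a₀, ha₀⟩ := hne
  -- c is closed under addition
  have hadd : ∀ a ∈ c, ∀ b ∈ c, a + b ∈ c := by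
    intro a ha b hb
    have h := hconv ha hb (by norm_num : (0:ℝ) ≤ 1/2) (by norm_num : (0:ℝ) ≤ 1/2)
      (by norm_num)
    have h2 := hcone _ h 2 (by norm_num)
    have : (2:ℝ) • ((1/2 : ℝ) • a + (1/2 : ℝ) • b) = a + b := by
      rw [smul_add, smul_smul, smul_smul]; norm_num
    rwa [this] at h2
  -- the difference set as a submodule
  set p : Submodule ℝ V :=
    { carrier := {v | ∃ a ∈ c, ∃ b ∈ c, v = b - a}
      add_mem' := by
        rintro u v ⟨a, ha, b, hb, rfl⟩ ⟨a', ha', b', hb', rfl⟩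
        exact ⟨a + a', hadd a ha a' ha', b + b', hadd b hb b' hb', by abel⟩
      zero_mem' := ⟨a₀, ha₀, a₀, ha₀, by simp⟩
      smul_mem' := by
        rintro r v ⟨a, ha, b, hb, rfl⟩
        rcases lt_trichotomy r 0 with hr | hr | hr
        · refine ⟨(-r) • b, hcone b hb _ (by linarith), (-r) • a,
            hcone a ha _ (by linarith), ?_⟩
          simp [smul_sub, neg_smul]; abel
        · exact ⟨a₀, ha₀, a₀, ha₀, by simp [hr]⟩
        · exact ⟨r • a, hcone a ha r hr, r • b, hcone b hb r hr, by
            simp [smul_sub]⟩ } with hp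
  have hspan : Submodule.span ℝ c = p := by
    apply le_antisymm
    · rw [Submodule.span_le]
      intro a ha
      exact ⟨a₀, ha₀, a + a₀, hadd a ha a₀ ha₀, by abel⟩
    · rintro v ⟨a, ha, b, hb, rfl⟩
      exact sub_mem (Submodule.subset_span hb) (Submodule.subset_span ha)
  -- key characterization
  have key : ∀ x y : Y, (coneAt c x ∩ coneAt c y).Nonempty ↔
      x -ᵥ y ∈ Submodule.span ℝ c := by
    intro x y
    rw [hspan]
    constructor
    · rintro ⟨w, ⟨a, ha, rfl⟩, ⟨b, hb, hw⟩⟩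
      simp only at hw
      refine ⟨a, ha, b, hb, ?_⟩
      have h0 : (a +ᵥ x) -ᵥ (b +ᵥ y) = (0:V) := by rw [hw, vsub_self]
      rw [vadd_vsub_assoc, vsub_vadd_eq_vsub_sub] at h0
      have h1 : x -ᵥ y - b = -a := by
        have := eq_neg_of_add_eq_zero_right h0
        rw [this]
      rw [sub_eq_iff_eq_add] at h1
      rw [h1]; abel
    · rintro ⟨a, ha, b, hb, hv⟩
      refine ⟨a +ᵥ x, ⟨a, ha, rfl⟩, ⟨b, hb, ?_⟩⟩
      have : x = (b - a) +ᵥ y := by rw [← hv, vsub_vadd]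
      rw [this, vadd_vadd]
      congr 1
      abel
  refine ⟨?_, key, ?_, ?_⟩
  · intro x y
    constructor
    · rintro ⟨w, ⟨a, ha, rfl⟩, ⟨b, hb, hw⟩⟩
      refine ⟨a +ᵥ x, ?_⟩
      rintro _ ⟨d, hd, rfl⟩
      constructor
      · exact ⟨d + a, hadd d hd a ha, by simp [vadd_vadd]⟩
      · refine ⟨d + b, hadd d hd b hb, ?_⟩
        simp only at hw ⊢
        rw [← vadd_vadd, hw, vadd_vadd]
      -- done
    · rintro ⟨z, hz⟩
      exact ⟨a₀ +ᵥ z, hz ⟨a₀, ha₀, rfl⟩⟩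
  · refine ⟨fun x => ?_, fun {x y} h => ?_, fun {x y z} h1 h2 => ?_⟩
    · rw [key]; simp
    · obtain ⟨w, hw1, hw2⟩ := h; exact ⟨w, hw2, hw1⟩
    · rw [key] at h1 h2 ⊢
      have := Submodule.add_mem _ h1 h2
      rwa [vsub_add_vsub_cancel] at this
  · intro o x y
    rw [key, Submodule.Quotient.eq, vsub_sub_vsub_cancel_right]
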